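/- arXiv:2008.03131 — 4 statements merged into one kernel-verified Lean document; each statement's English description precedes it below -/
import Mathlib

section
/- In a 4-3-6-5 sequence, types (4,3) and (4,2) can occur only among the first two elements of the sequence; they never appear later. -/
/-- One transition of Table 1 of the paper, acting on (current element, type). -/
def step465 : ℕ × ℕ × ℕ → ℕ × ℕ × ℕ
  | (t, 4, 3) => (t - 1, 4, 2)
  | (t, 4, 2) => (t - 1, 4, 1)
  | (t, 4, 1) => ((3 * t + 1) / 4, 3, 1)
  | (t, 4, 0) => (3 * t / 4, 3, 0)
  | (t, 3, 1) => if 4 < t then (t, 6, t % 6) else (3, 3, 0)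
  | (t, 3, 0) => if 4 < t then (t, 6, t % 6) else (t, 3, 0)
  | (t, 6, 4) => (t - 1, 6, 3)
  | (t, 6, 3) => (t - 1, 6, 2)
  | (t, 6, 2) => (t - 1, 6, 1)
  | (t, 6, 1) => ((5 * t + 1) / 6, 5, 1)
  | (t, 6, 0) => (5 * t / 6, 5, 0)
  | (t, 5, 1) => ((4 * t + 1) / 5, 4, 1)
  | (t, 5, 0) => (4 * t / 5, 4, 0)
  | p => p

/-- The `i`-th element (0-indexed, paired with its type) of the 4-3-6-5 sequence starting at `k`. -/
def seq465 (k i : ℕ) : ℕ × ℕ × ℕ := step465^[i] (k, 4, k % 4)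


lemma step465_ne_43 (p : ℕ × ℕ × ℕ) : (step465 p).2 ≠ (4, 3) := by
  unfold step465
  split <;> first | (split <;> simp) | simp
  rename_i h43 h42 h41 h40 h31 h30 h64 h63 h62 h61 h60 h51 h50
  obtain ⟨t, a, b⟩ := p
  intro h
  simp only [Prod.mk.injEq] at h
  exact h43 t (by simp [h.1, h.2])

lemma step465_ne_42 (p : ℕ × ℕ × ℕ) (h : p.2 ≠ (4, 3)) : (step465 p).2 ≠ (4, 2) := by
  unfold step465
  split <;> first | (split <;> simp) | simp_all
  rename_i h43 h42 h41 h40 h31 h30 h64 h63 h62 h61 h60 h51 h50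
  obtain ⟨t, a, b⟩ := p
  intro h'
  simp only [Prod.mk.injEq] at h'
  exact h42 t (by simp [h'.1, h'.2])

/-- In a 4-3-6-5 sequence, types `(4,3)` and `(4,2)` can occur only among the first two
elements of the sequence; they never appear later. -/
theorem seq465_no_late_43_42 (k : ℕ) (hk : 4 ≤ k) (i : ℕ) (hi : 2 ≤ i) :
    (seq465 k i).2 ≠ (4, 3) ∧ (seq465 k i).2 ≠ (4, 2) := by
  obtain ⟨j, rfl⟩ : ∃ j, i = 2 + j := ⟨i - 2, by omega⟩
  unfold seq465
  rw [Function.iterate_add_apply]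
  exact ⟨step465_ne_43 _, step465_ne_42 _ (step465_ne_43 _)⟩
end

section
/- If an element t of type (4,0) begins a segment of a 4-3-6-5 sequence and the segment has 4 elements, then the segment is exactly {t, 3t/4, 3t/4, 5t/8} and the next segment begins with the element t/2 of type (4,0). -/
/-- An element starts a new segment iff its type is `(4,0)` or `(4,1)`. -/
def isStart465 (p : ℕ × ℕ × ℕ) : Prop := p.2 = (4, 0) ∨ p.2 = (4, 1)

/-- Invariant relating the value to the residue recorded in the type. -/
def Inv465 (p : ℕ × ℕ × ℕ) : Prop :=
  (p.2.1 = 4 → p.1 % 4 = p.2.2) ∧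
  (p.2.1 = 6 → p.1 % 6 = p.2.2) ∧
  (p.2.1 = 5 → p.1 % 5 = p.2.2 ∧ p.2.2 < 2) ∧
  (p.2.1 = 3 → p.2.2 < 2) ∧
  (p.2.1 = 3 ∨ p.2.1 = 4 ∨ p.2.1 = 5 ∨ p.2.1 = 6)

lemma inv465_step (p : ℕ × ℕ × ℕ) (h : Inv465 p) : Inv465 (step465 p) := by
  obtain ⟨t, a, c⟩ := p
  obtain ⟨h4, h6, h5, h3, ha⟩ := h
  simp only [Inv465] at *
  rcases ha with ha | ha | ha | ha <;> subst ha
  · -- a = 3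
    have hc : c < 2 := h3 rfl
    interval_cases c <;>
      · simp only [step465]
        split <;> simp <;> omega
  · -- a = 4
    have hc : c < 4 := by have := h4 rfl; omega
    interval_cases c <;> simp_all [step465] <;> omega
  · -- a = 5
    have hc : c < 2 := (h5 rfl).2
    interval_cases c <;> simp_all [step465] <;> omega
  · -- a = 6
    have hc : c < 6 := by have := h6 rfl; omega
    interval_cases c <;> simp_all [step465] <;> omega

lemma inv465_seq (k i : ℕ) : Inv465 (seq465 k i) := by
  induction i with
  | zero =>
      have hc : k % 4 < 4 := Nat.mod_lt _ (by norm_num)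
      show Inv465 (k, 4, k % 4)
      interval_cases h : k % 4 <;> simp [Inv465, h]
  | succ n ih =>
      have : seq465 k (n + 1) = step465 (seq465 k n) := by
        simp [seq465, Function.iterate_succ_apply']
      rw [this]
      exact inv465_step _ ih

lemma seq465_succ (k i : ℕ) : seq465 k (i + 1) = step465 (seq465 k i) := by
  simp [seq465, Function.iterate_succ_apply']

/-- If an element `t` of type `(4,0)` begins a segment of a 4-3-6-5 sequence and the segment
has exactly 4 elements, then the segment is `t, 3t/4, 3t/4, 5t/8` and the next segment begins
with the element `t/2` of type `(4,0)`. -/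
theorem seq465_segment40_four (k : ℕ) (hk : 4 ≤ k) (i t : ℕ)
    (hstart : seq465 k i = (t, 4, 0))
    (hmid : ∀ m, i < m → m < i + 4 → ¬ isStart465 (seq465 k m))
    (hnext : isStart465 (seq465 k (i + 4))) :
    (seq465 k (i + 1)).1 = 3 * t / 4 ∧ (seq465 k (i + 2)).1 = 3 * t / 4 ∧
    (seq465 k (i + 3)).1 = 5 * t / 8 ∧ seq465 k (i + 4) = (t / 2, 4, 0) := by
  have hinv : Inv465 (seq465 k i) := inv465_seq k i
  rw [hstart] at hinv
  have ht4 : t % 4 = 0 := hinv.1 rfl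
  set u := 3 * t / 4 with hu
  have h1 : seq465 k (i + 1) = (u, 3, 0) := by
    rw [seq465_succ, hstart]; simp [step465, hu]
  by_cases hbig : 4 < u
  · -- from (u,3,0) we go to (u,6,u%6)
    have h2 : seq465 k (i + 2) = (u, 6, u % 6) := by
      rw [show i + 2 = (i + 1) + 1 from rfl, seq465_succ, h1]
      simp [step465, hbig]
    have hu3 : u % 3 = 0 := by omega
    have hu6 : u % 6 = 0 ∨ u % 6 = 3 := by omega
    rcases hu6 with hu6 | hu6
    · have h3 : seq465 k (i + 3) = (5 * u / 6, 5, 0) := by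
        rw [show i + 3 = (i + 2) + 1 from rfl, seq465_succ, h2, hu6]
        simp [step465]
      have h4 : seq465 k (i + 4) = (4 * (5 * u / 6) / 5, 4, 0) := by
        rw [show i + 4 = (i + 3) + 1 from rfl, seq465_succ, h3]
        simp [step465]
      refine ⟨by rw [h1], by rw [h2], ?_, ?_⟩
      · rw [h3]; show 5 * u / 6 = 5 * t / 8; omega
      · rw [h4]
        have : 4 * (5 * u / 6) / 5 = t / 2 := by omega
        rw [this]
    · -- u % 6 = 3 : the element at i+4 has type (6,1), contradicting hnext
      have h3 : seq465 k (i + 3) = (u - 1, 6, 2) := by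
        rw [show i + 3 = (i + 2) + 1 from rfl, seq465_succ, h2, hu6]
        simp [step465]
      have h4 : seq465 k (i + 4) = (u - 1 - 1, 6, 1) := by
        rw [show i + 4 = (i + 3) + 1 from rfl, seq465_succ, h3]
        simp [step465]
      rw [h4] at hnext
      simp [isStart465] at hnext
  · -- u ≤ 4 : the sequence is stuck at (u,3,0), contradicting hnext
    have h2 : seq465 k (i + 2) = (u, 3, 0) := by
      rw [show i + 2 = (i + 1) + 1 from rfl, seq465_succ, h1]
      simp [step465, hbig]
    have h3 : seq465 k (i + 3) = (u, 3, 0) := by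
      rw [show i + 3 = (i + 2) + 1 from rfl, seq465_succ, h2]
      simp [step465, hbig]
    have h4 : seq465 k (i + 4) = (u, 3, 0) := by
      rw [show i + 4 = (i + 3) + 1 from rfl, seq465_succ, h3]
      simp [step465, hbig]
    rw [h4] at hnext
    simp [isStart465] at hnext
end

section
/- If an element t of type (4,1) begins a segment of a 4-3-6-5 sequence, then the first element of the next segment is at most (t+1)/2. -/
lemma step465_key (t j : ℕ) (hj0 : 0 < j)
    (hj : isStart465 (step465^[j] (t, 4, 1)))
    (hfirst : ∀ m, 0 < m → m < j → ¬ isStart465 (step465^[m] (t, 4, 1))) :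
    (step465^[j] (t, 4, 1)).1 ≤ (t + 1) / 2 := by
  set u := (3 * t + 1) / 4 with hu
  have h1 : step465^[1] (t, 4, 1) = (u, 3, 1) := rfl
  by_cases h4u : 4 < u
  · have h2 : step465^[2] (t, 4, 1) = (u, 6, u % 6) := by
      rw [Function.iterate_succ_apply', h1]
      simp [step465, h4u]
    have hr : u % 6 = 0 ∨ u % 6 = 1 ∨ u % 6 = 2 ∨ u % 6 = 3 ∨ u % 6 = 4 ∨ u % 6 = 5 := by omega
    rcases hr with hm | hm | hm | hm | hm | hm
    · -- u % 6 = 0, next start at step 4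
      have h3 : step465^[3] (t, 4, 1) = (5 * u / 6, 5, 0) := by
        rw [Function.iterate_succ_apply', h2, hm]; rfl
      have h4 : step465^[4] (t, 4, 1) = (4 * (5 * u / 6) / 5, 4, 0) := by
        rw [Function.iterate_succ_apply', h3]; rfl
      have hjeq : j = 4 := by
        rcases lt_trichotomy j 4 with h | h | h
        · interval_cases j
          · rw [h1] at hj; simp [isStart465] at hj
          · rw [h2, hm] at hj; simp [isStart465] at hj
          · rw [h3] at hj; simp [isStart465] at hj
        · exact h
        · exact absurd (by rw [h4]; exact Or.inl rfl) (hfirst 4 (by norm_num) h)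
      subst hjeq
      rw [h4]
      show 4 * (5 * u / 6) / 5 ≤ (t + 1) / 2
      omega
    · -- u % 6 = 1
      have h3 : step465^[3] (t, 4, 1) = ((5 * u + 1) / 6, 5, 1) := by
        rw [Function.iterate_succ_apply', h2, hm]; rfl
      have h4 : step465^[4] (t, 4, 1) = ((4 * ((5 * u + 1) / 6) + 1) / 5, 4, 1) := by
        rw [Function.iterate_succ_apply', h3]; rfl
      have hjeq : j = 4 := by
        rcases lt_trichotomy j 4 with h | h | h
        · interval_cases j
          · rw [h1] at hj; simp [isStart465] at hj
          · rw [h2, hm] at hj; simp [isStart465] at hj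
          · rw [h3] at hj; simp [isStart465] at hj
        · exact h
        · exact absurd (by rw [h4]; exact Or.inr rfl) (hfirst 4 (by norm_num) h)
      subst hjeq
      rw [h4]
      show (4 * ((5 * u + 1) / 6) + 1) / 5 ≤ (t + 1) / 2
      omega
    · -- u % 6 = 2
      have h3 : step465^[3] (t, 4, 1) = (u - 1, 6, 1) := by
        rw [Function.iterate_succ_apply', h2, hm]; rfl
      have h4 : step465^[4] (t, 4, 1) = ((5 * (u - 1) + 1) / 6, 5, 1) := by
        rw [Function.iterate_succ_apply', h3]; rfl
      have h5 : step465^[5] (t, 4, 1) = ((4 * ((5 * (u - 1) + 1) / 6) + 1) / 5, 4, 1) := by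
        rw [Function.iterate_succ_apply', h4]; rfl
      have hjeq : j = 5 := by
        rcases lt_trichotomy j 5 with h | h | h
        · interval_cases j
          · rw [h1] at hj; simp [isStart465] at hj
          · rw [h2, hm] at hj; simp [isStart465] at hj
          · rw [h3] at hj; simp [isStart465] at hj
          · rw [h4] at hj; simp [isStart465] at hj
        · exact h
        · exact absurd (by rw [h5]; exact Or.inr rfl) (hfirst 5 (by norm_num) h)
      subst hjeq
      rw [h5]
      show (4 * ((5 * (u - 1) + 1) / 6) + 1) / 5 ≤ (t + 1) / 2
      omega
    · -- u % 6 = 3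
      have h3 : step465^[3] (t, 4, 1) = (u - 1, 6, 2) := by
        rw [Function.iterate_succ_apply', h2, hm]; rfl
      have h4 : step465^[4] (t, 4, 1) = (u - 1 - 1, 6, 1) := by
        rw [Function.iterate_succ_apply', h3]; rfl
      have h5 : step465^[5] (t, 4, 1) = ((5 * (u - 1 - 1) + 1) / 6, 5, 1) := by
        rw [Function.iterate_succ_apply', h4]; rfl
      have h6 : step465^[6] (t, 4, 1) = ((4 * ((5 * (u - 1 - 1) + 1) / 6) + 1) / 5, 4, 1) := by
        rw [Function.iterate_succ_apply', h5]; rfl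
      have hjeq : j = 6 := by
        rcases lt_trichotomy j 6 with h | h | h
        · interval_cases j
          · rw [h1] at hj; simp [isStart465] at hj
          · rw [h2, hm] at hj; simp [isStart465] at hj
          · rw [h3] at hj; simp [isStart465] at hj
          · rw [h4] at hj; simp [isStart465] at hj
          · rw [h5] at hj; simp [isStart465] at hj
        · exact h
        · exact absurd (by rw [h6]; exact Or.inr rfl) (hfirst 6 (by norm_num) h)
      subst hjeq
      rw [h6]
      show (4 * ((5 * (u - 1 - 1) + 1) / 6) + 1) / 5 ≤ (t + 1) / 2
      omega
    · -- u % 6 = 4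
      have h3 : step465^[3] (t, 4, 1) = (u - 1, 6, 3) := by
        rw [Function.iterate_succ_apply', h2, hm]; rfl
      have h4 : step465^[4] (t, 4, 1) = (u - 1 - 1, 6, 2) := by
        rw [Function.iterate_succ_apply', h3]; rfl
      have h5 : step465^[5] (t, 4, 1) = (u - 1 - 1 - 1, 6, 1) := by
        rw [Function.iterate_succ_apply', h4]; rfl
      have h6 : step465^[6] (t, 4, 1) = ((5 * (u - 1 - 1 - 1) + 1) / 6, 5, 1) := by
        rw [Function.iterate_succ_apply', h5]; rfl
      have h7 : step465^[7] (t, 4, 1)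
          = ((4 * ((5 * (u - 1 - 1 - 1) + 1) / 6) + 1) / 5, 4, 1) := by
        rw [Function.iterate_succ_apply', h6]; rfl
      have hjeq : j = 7 := by
        rcases lt_trichotomy j 7 with h | h | h
        · interval_cases j
          · rw [h1] at hj; simp [isStart465] at hj
          · rw [h2, hm] at hj; simp [isStart465] at hj
          · rw [h3] at hj; simp [isStart465] at hj
          · rw [h4] at hj; simp [isStart465] at hj
          · rw [h5] at hj; simp [isStart465] at hj
          · rw [h6] at hj; simp [isStart465] at hj
        · exact h
        · exact absurd (by rw [h7]; exact Or.inr rfl) (hfirst 7 (by norm_num) h)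
      subst hjeq
      rw [h7]
      show (4 * ((5 * (u - 1 - 1 - 1) + 1) / 6) + 1) / 5 ≤ (t + 1) / 2
      omega
    · -- u % 6 = 5 : the sequence is stuck at (u,6,5); contradiction with hj
      exfalso
      have hfix : ∀ n, step465^[2 + n] (t, 4, 1) = (u, 6, 5) := by
        intro n
        induction n with
        | zero => rw [h2, hm]
        | succ n ih =>
          rw [show 2 + (n + 1) = (2 + n) + 1 from rfl, Function.iterate_succ_apply', ih]; rfl
      rcases Nat.lt_or_ge j 2 with h | h
      · interval_cases j
        rw [h1] at hj; simp [isStart465] at hj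
      · have := hfix (j - 2)
        rw [show 2 + (j - 2) = j by omega] at this
        rw [this] at hj
        simp [isStart465] at hj
  · -- u ≤ 4 : the sequence gets stuck at (3,3,0); contradiction with hj
    exfalso
    have h2 : step465^[2] (t, 4, 1) = (3, 3, 0) := by
      rw [Function.iterate_succ_apply', h1]
      simp [step465, h4u]
    have hfix : ∀ n, step465^[2 + n] (t, 4, 1) = (3, 3, 0) := by
      intro n
      induction n with
      | zero => exact h2
      | succ n ih =>
        rw [show 2 + (n + 1) = (2 + n) + 1 from rfl, Function.iterate_succ_apply', ih]; rfl
    rcases Nat.lt_or_ge j 2 with h | h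
    · interval_cases j
      rw [h1] at hj; simp [isStart465] at hj
    · have := hfix (j - 2)
      rw [show 2 + (j - 2) = j by omega] at this
      rw [this] at hj
      simp [isStart465] at hj

/-- If an element `t` of type `(4,1)` begins a segment of a 4-3-6-5 sequence, then the first
element of the next segment is at most `(t+1)/2`. -/
theorem seq465_segment41_next (k : ℕ) (hk : 4 ≤ k) (i t j : ℕ)
    (hstart : seq465 k i = (t, 4, 1))
    (hij : i < j) (hj : isStart465 (seq465 k j))
    (hfirst : ∀ m, i < m → m < j → ¬ isStart465 (seq465 k m)) :
    (seq465 k j).1 ≤ (t + 1) / 2 := by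
  have hseq : ∀ m, seq465 k (i + m) = step465^[m] (t, 4, 1) := by
    intro m
    rw [seq465, show i + m = m + i by omega, Function.iterate_add_apply, ← seq465, hstart]
  have hjs : seq465 k j = step465^[j - i] (t, 4, 1) := by
    have := hseq (j - i)
    rwa [show i + (j - i) = j by omega] at this
  rw [hjs]
  exact step465_key t (j - i) (by omega) (by rwa [← hjs])
    (fun m hm1 hm2 => by
      rw [← hseq m]
      exact hfirst (i + m) (by omega) (by omega))
end

section
/- The total number of elements N(k) of the 4-3-6-5 sequence starting at k satisfies N(k) ≤ 7·log₂(k). -/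
namespace Step465Aux

lemma st40 (t : ℕ) : step465 (t, 4, 0) = (3 * t / 4, 3, 0) := rfl
lemma st41 (t : ℕ) : step465 (t, 4, 1) = ((3 * t + 1) / 4, 3, 1) := rfl
lemma st42 (t : ℕ) : step465 (t, 4, 2) = (t - 1, 4, 1) := rfl
lemma st43 (t : ℕ) : step465 (t, 4, 3) = (t - 1, 4, 2) := rfl
lemma st30 (t : ℕ) : step465 (t, 3, 0) = if 4 < t then (t, 6, t % 6) else (t, 3, 0) := rfl
lemma st31 (t : ℕ) : step465 (t, 3, 1) = if 4 < t then (t, 6, t % 6) else (3, 3, 0) := rfl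
lemma st60 (t : ℕ) : step465 (t, 6, 0) = (5 * t / 6, 5, 0) := rfl
lemma st61 (t : ℕ) : step465 (t, 6, 1) = ((5 * t + 1) / 6, 5, 1) := rfl
lemma st62 (t : ℕ) : step465 (t, 6, 2) = (t - 1, 6, 1) := rfl
lemma st63 (t : ℕ) : step465 (t, 6, 3) = (t - 1, 6, 2) := rfl
lemma st64 (t : ℕ) : step465 (t, 6, 4) = (t - 1, 6, 3) := rfl
lemma st50 (t : ℕ) : step465 (t, 5, 0) = (4 * t / 5, 5 - 1, 0) := rfl
lemma st51 (t : ℕ) : step465 (t, 5, 1) = ((4 * t + 1) / 5, 4, 1) := rfl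

/-- Key logarithmic gain lemma. -/
lemma logb_gain (c t t' : ℕ) (ht' : 1 ≤ t')
    (h : (2 : ℝ) ^ c * (t' : ℝ) ^ 7 ≤ (t : ℝ) ^ 7) :
    (c : ℝ) + 7 * Real.logb 2 t' ≤ 7 * Real.logb 2 t := by
  have h0 : (0 : ℝ) < t' := by exact_mod_cast ht'
  have hpos : (0 : ℝ) < (t : ℝ) ^ 7 :=
    lt_of_lt_of_le (by positivity) h
  have h1 : (0 : ℝ) < t := by
    by_contra hle
    push_neg at hle
    have : (t : ℝ) = 0 := le_antisymm hle (Nat.cast_nonneg t)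
    rw [this] at hpos; norm_num at hpos
  have hle : Real.logb 2 ((2 : ℝ) ^ c * (t' : ℝ) ^ 7) ≤ Real.logb 2 ((t : ℝ) ^ 7) :=
    Real.logb_le_logb_of_le (by norm_num) (by positivity) h
  rw [Real.logb_mul (by positivity) (by positivity), Real.logb_pow, Real.logb_pow,
    Real.logb_pow] at hle
  rw [Real.logb_self_eq_one (by norm_num)] at hle
  push_cast at hle ⊢
  linarith

lemma main465 : ∀ t : ℕ, 4 ≤ t → t % 4 ≤ 1 → ∀ n : ℕ,
    step465^[n] (t, 4, t % 4) = (3, 3, 0) →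
    (∀ m, m < n → step465^[m] (t, 4, t % 4) ≠ (3, 3, 0)) →
    ((n + 1 : ℕ) : ℝ) ≤ 7 * Real.logb 2 t - 2 := by
  intro t
  induction t using Nat.strong_induction_on with
  | _ t ih =>
  intro ht hr n hterm hmin
  have hcases : (t = 4) ∨ (t = 5) ∨ (∃ b, 1 ≤ b ∧ t = 8 * b) ∨ (∃ b, 1 ≤ b ∧ t = 8 * b + 1)
      ∨ (∃ b, 1 ≤ b ∧ t = 8 * b + 4) ∨ (∃ b, 1 ≤ b ∧ t = 8 * b + 5) := by
    have h8 : t % 8 = 0 ∨ t % 8 = 1 ∨ t % 8 = 4 ∨ t % 8 = 5 := by omega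
    have hb8 : t = 8 * (t / 8) + t % 8 := by omega
    rcases h8 with h | h | h | h
    · exact Or.inr (Or.inr (Or.inl ⟨t / 8, by omega, by omega⟩))
    · exact Or.inr (Or.inr (Or.inr (Or.inl ⟨t / 8, by omega, by omega⟩)))
    · rcases Nat.eq_zero_or_pos (t / 8) with h0 | h0
      · exact Or.inl (by omega)
      · exact Or.inr (Or.inr (Or.inr (Or.inr (Or.inl ⟨t / 8, by omega, by omega⟩))))
    · rcases Nat.eq_zero_or_pos (t / 8) with h0 | h0
      · exact Or.inr (Or.inl (by omega))
      · exact Or.inr (Or.inr (Or.inr (Or.inr (Or.inr ⟨t / 8, by omega, by omega⟩))))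
  rcases hcases with rfl | rfl | ⟨b, hb, rfl⟩ | ⟨b, hb, rfl⟩ | ⟨b, hb, rfl⟩ | ⟨b, hb, rfl⟩
  · -- t = 4
    have hc1 : step465^[1] (4, 4, 4 % 4) = (3, 3, 0) := rfl
    have hn1 : n ≤ 1 := by
      by_contra h
      exact hmin 1 (by omega) hc1
    have hn0 : n ≠ 0 := by
      intro h; subst h
      simp [Prod.ext_iff] at hterm; try omega
    have hn : n = 1 := by omega
    subst hn
    have hg := logb_gain 4 4 1 le_rfl (by norm_num)
    rw [Nat.cast_one, Real.logb_one] at hg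
    push_cast
    push_cast at hg
    linarith
  · -- t = 5
    have hc2 : step465^[2] (5, 4, 5 % 4) = (3, 3, 0) := rfl
    have hn2 : n ≤ 2 := by
      by_contra h
      exact hmin 2 (by omega) hc2
    have hg := logb_gain 5 5 1 le_rfl (by norm_num)
    rw [Nat.cast_one, Real.logb_one] at hg
    push_cast
    push_cast at hg
    have : ((n : ℝ)) ≤ 2 := by exact_mod_cast hn2
    linarith
  · -- t = 8b, cycle of length 4 to 4b
    have hmod : (8 * b) % 4 = 0 := by omega
    rw [hmod] at hterm hmin
    have e1 : step465 (8 * b, 4, 0) = (6 * b, 3, 0) := by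
      rw [st40]; simp only [Prod.mk.injEq, and_true, true_and]; omega
    have e2 : step465 (6 * b, 3, 0) = (6 * b, 6, 0) := by
      rw [st30, if_pos (by omega)]; simp only [Prod.mk.injEq, and_true, true_and]; omega
    have e3 : step465 (6 * b, 6, 0) = (5 * b, 5, 0) := by
      rw [st60]; simp only [Prod.mk.injEq, and_true, true_and]; omega
    have e4 : step465 (5 * b, 5, 0) = (4 * b, 4, 0) := by
      rw [st50]; simp only [Prod.mk.injEq, and_true, true_and]; omega
    have hc1 : step465^[1] (8 * b, 4, 0) = (6 * b, 3, 0) := by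
      rw [Function.iterate_one, e1]
    have hc2 : step465^[2] (8 * b, 4, 0) = (6 * b, 6, 0) := by
      rw [show (2 : ℕ) = 1 + 1 from rfl, Function.iterate_add_apply, hc1,
        Function.iterate_one, e2]
    have hc3 : step465^[3] (8 * b, 4, 0) = (5 * b, 5, 0) := by
      rw [show (3 : ℕ) = 1 + 2 from rfl, Function.iterate_add_apply, hc2,
        Function.iterate_one, e3]
    have hc4 : step465^[4] (8 * b, 4, 0) = (4 * b, 4, 0) := by
      rw [show (4 : ℕ) = 1 + 3 from rfl, Function.iterate_add_apply, hc3,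
        Function.iterate_one, e4]
    have hn4 : 4 ≤ n := by
      by_contra h
      push_neg at h
      interval_cases n
      · simp [Prod.ext_iff] at hterm; try omega
      · rw [hc1] at hterm; simp [Prod.ext_iff] at hterm; try omega
      · rw [hc2] at hterm; simp [Prod.ext_iff] at hterm; try omega
      · rw [hc3] at hterm; simp [Prod.ext_iff] at hterm; try omega
    obtain ⟨m, rfl⟩ : ∃ m, n = m + 4 := ⟨n - 4, by omega⟩
    have hmod' : (4 * b) % 4 = 0 := by omega
    have hterm' : step465^[m] (4 * b, 4, (4 * b) % 4) = (3, 3, 0) := by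
      rw [hmod', ← hc4, ← Function.iterate_add_apply]
      exact hterm
    have hmin' : ∀ m', m' < m → step465^[m'] (4 * b, 4, (4 * b) % 4) ≠ (3, 3, 0) := by
      intro m' hm'
      rw [hmod', ← hc4, ← Function.iterate_add_apply]
      exact hmin (m' + 4) (by omega)
    have IH := ih (4 * b) (by omega) (by omega) (by omega) m hterm' hmin'
    have hg : (4 : ℝ) + 7 * Real.logb 2 (4 * b : ℕ) ≤ 7 * Real.logb 2 (8 * b : ℕ) := by
      have := logb_gain 4 (8 * b) (4 * b) (by omega) (by
        push_cast
        have hB : (1 : ℝ) ≤ (b : ℝ) := by exact_mod_cast hb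
        have hkey : ((8 : ℝ) * b) ^ 7 = 2 ^ 7 * ((4 : ℝ) * b) ^ 7 := by ring
        have h0 : (0 : ℝ) ≤ ((4 : ℝ) * b) ^ 7 := by positivity
        rw [hkey]
        nlinarith)
      push_cast at this ⊢
      linarith
    push_cast at IH hg ⊢
    linarith
  · -- t = 8b + 1, cycle of length 4 to 4b + 1
    have hmod : (8 * b + 1) % 4 = 1 := by omega
    rw [hmod] at hterm hmin
    have e1 : step465 (8 * b + 1, 4, 1) = (6 * b + 1, 3, 1) := by
      rw [st41]; simp only [Prod.mk.injEq, and_true, true_and]; omega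
    have e2 : step465 (6 * b + 1, 3, 1) = (6 * b + 1, 6, 1) := by
      rw [st31, if_pos (by omega)]; simp only [Prod.mk.injEq, and_true, true_and]; omega
    have e3 : step465 (6 * b + 1, 6, 1) = (5 * b + 1, 5, 1) := by
      rw [st61]; simp only [Prod.mk.injEq, and_true, true_and]; omega
    have e4 : step465 (5 * b + 1, 5, 1) = (4 * b + 1, 4, 1) := by
      rw [st51]; simp only [Prod.mk.injEq, and_true, true_and]; omega
    have hc1 : step465^[1] (8 * b + 1, 4, 1) = (6 * b + 1, 3, 1) := by
      rw [Function.iterate_one, e1]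
    have hc2 : step465^[2] (8 * b + 1, 4, 1) = (6 * b + 1, 6, 1) := by
      rw [show (2 : ℕ) = 1 + 1 from rfl, Function.iterate_add_apply, hc1,
        Function.iterate_one, e2]
    have hc3 : step465^[3] (8 * b + 1, 4, 1) = (5 * b + 1, 5, 1) := by
      rw [show (3 : ℕ) = 1 + 2 from rfl, Function.iterate_add_apply, hc2,
        Function.iterate_one, e3]
    have hc4 : step465^[4] (8 * b + 1, 4, 1) = (4 * b + 1, 4, 1) := by
      rw [show (4 : ℕ) = 1 + 3 from rfl, Function.iterate_add_apply, hc3,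
        Function.iterate_one, e4]
    have hn4 : 4 ≤ n := by
      by_contra h
      push_neg at h
      interval_cases n
      · simp [Prod.ext_iff] at hterm; try omega
      · rw [hc1] at hterm; simp [Prod.ext_iff] at hterm; try omega
      · rw [hc2] at hterm; simp [Prod.ext_iff] at hterm; try omega
      · rw [hc3] at hterm; simp [Prod.ext_iff] at hterm; try omega
    obtain ⟨m, rfl⟩ : ∃ m, n = m + 4 := ⟨n - 4, by omega⟩
    have hmod' : (4 * b + 1) % 4 = 1 := by omega
    have hterm' : step465^[m] (4 * b + 1, 4, (4 * b + 1) % 4) = (3, 3, 0) := by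
      rw [hmod', ← hc4, ← Function.iterate_add_apply]
      exact hterm
    have hmin' : ∀ m', m' < m → step465^[m'] (4 * b + 1, 4, (4 * b + 1) % 4) ≠ (3, 3, 0) := by
      intro m' hm'
      rw [hmod', ← hc4, ← Function.iterate_add_apply]
      exact hmin (m' + 4) (by omega)
    have IH := ih (4 * b + 1) (by omega) (by omega) (by omega) m hterm' hmin'
    have hg : (4 : ℝ) + 7 * Real.logb 2 (4 * b + 1 : ℕ) ≤ 7 * Real.logb 2 (8 * b + 1 : ℕ) := by
      have := logb_gain 4 (8 * b + 1) (4 * b + 1) (by omega) (by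
        push_cast
        have hB : (1 : ℝ) ≤ (b : ℝ) := by exact_mod_cast hb
        have hlin : (9 / 5 : ℝ) * (4 * b + 1) ≤ 8 * b + 1 := by linarith
        have hpow : ((9 / 5 : ℝ) * (4 * b + 1)) ^ 7 ≤ ((8 : ℝ) * b + 1) ^ 7 :=
          pow_le_pow_left₀ (by positivity) hlin 7
        have hkey : ((9 / 5 : ℝ) * (4 * b + 1)) ^ 7 = (9 / 5 : ℝ) ^ 7 * ((4 : ℝ) * b + 1) ^ 7 := by
          ring
        have h0 : (0 : ℝ) ≤ ((4 : ℝ) * b + 1) ^ 7 := by positivity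
        have h16 : (2 : ℝ) ^ 4 ≤ (9 / 5 : ℝ) ^ 7 := by norm_num
        nlinarith)
      push_cast at this ⊢
      linarith
    push_cast at IH hg ⊢
    linarith
  · -- t = 8b + 4, cycle of length 6 to 4b + 1
    have hmod : (8 * b + 4) % 4 = 0 := by omega
    rw [hmod] at hterm hmin
    have e1 : step465 (8 * b + 4, 4, 0) = (6 * b + 3, 3, 0) := by
      rw [st40]; simp only [Prod.mk.injEq, and_true, true_and]; omega
    have e2 : step465 (6 * b + 3, 3, 0) = (6 * b + 3, 6, 3) := by
      rw [st30, if_pos (by omega)]; simp only [Prod.mk.injEq, and_true, true_and]; omega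
    have e3 : step465 (6 * b + 3, 6, 3) = (6 * b + 2, 6, 2) := by
      rw [st63]; simp only [Prod.mk.injEq, and_true, true_and]; omega
    have e4 : step465 (6 * b + 2, 6, 2) = (6 * b + 1, 6, 1) := by
      rw [st62]; simp only [Prod.mk.injEq, and_true, true_and]; omega
    have e5 : step465 (6 * b + 1, 6, 1) = (5 * b + 1, 5, 1) := by
      rw [st61]; simp only [Prod.mk.injEq, and_true, true_and]; omega
    have e6 : step465 (5 * b + 1, 5, 1) = (4 * b + 1, 4, 1) := by
      rw [st51]; simp only [Prod.mk.injEq, and_true, true_and]; omega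
    have hc1 : step465^[1] (8 * b + 4, 4, 0) = (6 * b + 3, 3, 0) := by
      rw [Function.iterate_one, e1]
    have hc2 : step465^[2] (8 * b + 4, 4, 0) = (6 * b + 3, 6, 3) := by
      rw [show (2 : ℕ) = 1 + 1 from rfl, Function.iterate_add_apply, hc1,
        Function.iterate_one, e2]
    have hc3 : step465^[3] (8 * b + 4, 4, 0) = (6 * b + 2, 6, 2) := by
      rw [show (3 : ℕ) = 1 + 2 from rfl, Function.iterate_add_apply, hc2,
        Function.iterate_one, e3]
    have hc4 : step465^[4] (8 * b + 4, 4, 0) = (6 * b + 1, 6, 1) := by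
      rw [show (4 : ℕ) = 1 + 3 from rfl, Function.iterate_add_apply, hc3,
        Function.iterate_one, e4]
    have hc5 : step465^[5] (8 * b + 4, 4, 0) = (5 * b + 1, 5, 1) := by
      rw [show (5 : ℕ) = 1 + 4 from rfl, Function.iterate_add_apply, hc4,
        Function.iterate_one, e5]
    have hc6 : step465^[6] (8 * b + 4, 4, 0) = (4 * b + 1, 4, 1) := by
      rw [show (6 : ℕ) = 1 + 5 from rfl, Function.iterate_add_apply, hc5,
        Function.iterate_one, e6]
    have hn6 : 6 ≤ n := by
      by_contra h
      push_neg at h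
      interval_cases n
      · simp [Prod.ext_iff] at hterm; try omega
      · rw [hc1] at hterm; simp [Prod.ext_iff] at hterm; try omega
      · rw [hc2] at hterm; simp [Prod.ext_iff] at hterm; try omega
      · rw [hc3] at hterm; simp [Prod.ext_iff] at hterm; try omega
      · rw [hc4] at hterm; simp [Prod.ext_iff] at hterm; try omega
      · rw [hc5] at hterm; simp [Prod.ext_iff] at hterm; try omega
    obtain ⟨m, rfl⟩ : ∃ m, n = m + 6 := ⟨n - 6, by omega⟩
    have hmod' : (4 * b + 1) % 4 = 1 := by omega
    have hterm' : step465^[m] (4 * b + 1, 4, (4 * b + 1) % 4) = (3, 3, 0) := by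
      rw [hmod', ← hc6, ← Function.iterate_add_apply]
      exact hterm
    have hmin' : ∀ m', m' < m → step465^[m'] (4 * b + 1, 4, (4 * b + 1) % 4) ≠ (3, 3, 0) := by
      intro m' hm'
      rw [hmod', ← hc6, ← Function.iterate_add_apply]
      exact hmin (m' + 6) (by omega)
    have IH := ih (4 * b + 1) (by omega) (by omega) (by omega) m hterm' hmin'
    have hg : (6 : ℝ) + 7 * Real.logb 2 (4 * b + 1 : ℕ) ≤ 7 * Real.logb 2 (8 * b + 4 : ℕ) := by
      have := logb_gain 6 (8 * b + 4) (4 * b + 1) (by omega) (by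
        push_cast
        have hB : (0 : ℝ) ≤ (b : ℝ) := Nat.cast_nonneg b
        have hlin : (2 : ℝ) * (4 * b + 1) ≤ 8 * b + 4 := by linarith
        have hpow : ((2 : ℝ) * (4 * b + 1)) ^ 7 ≤ ((8 : ℝ) * b + 4) ^ 7 :=
          pow_le_pow_left₀ (by positivity) hlin 7
        have hkey : ((2 : ℝ) * (4 * b + 1)) ^ 7 = (2 : ℝ) ^ 7 * ((4 : ℝ) * b + 1) ^ 7 := by
          ring
        have h0 : (0 : ℝ) ≤ ((4 : ℝ) * b + 1) ^ 7 := by positivity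
        nlinarith)
      push_cast at this ⊢
      linarith
    push_cast at IH hg ⊢
    linarith
  · -- t = 8b + 5, cycle of length 7 to 4b + 1
    have hmod : (8 * b + 5) % 4 = 1 := by omega
    rw [hmod] at hterm hmin
    have e1 : step465 (8 * b + 5, 4, 1) = (6 * b + 4, 3, 1) := by
      rw [st41]; simp only [Prod.mk.injEq, and_true, true_and]; omega
    have e2 : step465 (6 * b + 4, 3, 1) = (6 * b + 4, 6, 4) := by
      rw [st31, if_pos (by omega)]; simp only [Prod.mk.injEq, and_true, true_and]; omega
    have e3 : step465 (6 * b + 4, 6, 4) = (6 * b + 3, 6, 3) := by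
      rw [st64]; simp only [Prod.mk.injEq, and_true, true_and]; omega
    have e4 : step465 (6 * b + 3, 6, 3) = (6 * b + 2, 6, 2) := by
      rw [st63]; simp only [Prod.mk.injEq, and_true, true_and]; omega
    have e5 : step465 (6 * b + 2, 6, 2) = (6 * b + 1, 6, 1) := by
      rw [st62]; simp only [Prod.mk.injEq, and_true, true_and]; omega
    have e6 : step465 (6 * b + 1, 6, 1) = (5 * b + 1, 5, 1) := by
      rw [st61]; simp only [Prod.mk.injEq, and_true, true_and]; omega
    have e7 : step465 (5 * b + 1, 5, 1) = (4 * b + 1, 4, 1) := by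
      rw [st51]; simp only [Prod.mk.injEq, and_true, true_and]; omega
    have hc1 : step465^[1] (8 * b + 5, 4, 1) = (6 * b + 4, 3, 1) := by
      rw [Function.iterate_one, e1]
    have hc2 : step465^[2] (8 * b + 5, 4, 1) = (6 * b + 4, 6, 4) := by
      rw [show (2 : ℕ) = 1 + 1 from rfl, Function.iterate_add_apply, hc1,
        Function.iterate_one, e2]
    have hc3 : step465^[3] (8 * b + 5, 4, 1) = (6 * b + 3, 6, 3) := by
      rw [show (3 : ℕ) = 1 + 2 from rfl, Function.iterate_add_apply, hc2,
        Function.iterate_one, e3]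
    have hc4 : step465^[4] (8 * b + 5, 4, 1) = (6 * b + 2, 6, 2) := by
      rw [show (4 : ℕ) = 1 + 3 from rfl, Function.iterate_add_apply, hc3,
        Function.iterate_one, e4]
    have hc5 : step465^[5] (8 * b + 5, 4, 1) = (6 * b + 1, 6, 1) := by
      rw [show (5 : ℕ) = 1 + 4 from rfl, Function.iterate_add_apply, hc4,
        Function.iterate_one, e5]
    have hc6 : step465^[6] (8 * b + 5, 4, 1) = (5 * b + 1, 5, 1) := by
      rw [show (6 : ℕ) = 1 + 5 from rfl, Function.iterate_add_apply, hc5,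
        Function.iterate_one, e6]
    have hc7 : step465^[7] (8 * b + 5, 4, 1) = (4 * b + 1, 4, 1) := by
      rw [show (7 : ℕ) = 1 + 6 from rfl, Function.iterate_add_apply, hc6,
        Function.iterate_one, e7]
    have hn7 : 7 ≤ n := by
      by_contra h
      push_neg at h
      interval_cases n
      · simp [Prod.ext_iff] at hterm; try omega
      · rw [hc1] at hterm; simp [Prod.ext_iff] at hterm; try omega
      · rw [hc2] at hterm; simp [Prod.ext_iff] at hterm; try omega
      · rw [hc3] at hterm; simp [Prod.ext_iff] at hterm; try omega
      · rw [hc4] at hterm; simp [Prod.ext_iff] at hterm; try omega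
      · rw [hc5] at hterm; simp [Prod.ext_iff] at hterm; try omega
      · rw [hc6] at hterm; simp [Prod.ext_iff] at hterm; try omega
    obtain ⟨m, rfl⟩ : ∃ m, n = m + 7 := ⟨n - 7, by omega⟩
    have hmod' : (4 * b + 1) % 4 = 1 := by omega
    have hterm' : step465^[m] (4 * b + 1, 4, (4 * b + 1) % 4) = (3, 3, 0) := by
      rw [hmod', ← hc7, ← Function.iterate_add_apply]
      exact hterm
    have hmin' : ∀ m', m' < m → step465^[m'] (4 * b + 1, 4, (4 * b + 1) % 4) ≠ (3, 3, 0) := by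
      intro m' hm'
      rw [hmod', ← hc7, ← Function.iterate_add_apply]
      exact hmin (m' + 7) (by omega)
    have IH := ih (4 * b + 1) (by omega) (by omega) (by omega) m hterm' hmin'
    have hg : (7 : ℝ) + 7 * Real.logb 2 (4 * b + 1 : ℕ) ≤ 7 * Real.logb 2 (8 * b + 5 : ℕ) := by
      have := logb_gain 7 (8 * b + 5) (4 * b + 1) (by omega) (by
        push_cast
        have hB : (0 : ℝ) ≤ (b : ℝ) := Nat.cast_nonneg b
        have hlin : (2 : ℝ) * (4 * b + 1) ≤ 8 * b + 5 := by linarith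
        have hpow : ((2 : ℝ) * (4 * b + 1)) ^ 7 ≤ ((8 : ℝ) * b + 5) ^ 7 :=
          pow_le_pow_left₀ (by positivity) hlin 7
        have hkey : ((2 : ℝ) * (4 * b + 1)) ^ 7 = (2 : ℝ) ^ 7 * ((4 : ℝ) * b + 1) ^ 7 := by
          ring
        linarith)
      push_cast at this ⊢
      linarith
    push_cast at IH hg ⊢
    linarith

end Step465Aux

/-- The total number of elements `N(k)` of the 4-3-6-5 sequence starting at `k` satisfies
`N(k) ≤ 7·log₂ k`.  Here the sequence has `n + 1` elements, where `n` is the position of the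
first terminal element `(3,(3,0))`. -/
theorem seq465_length_le (k : ℕ) (hk : 4 ≤ k) (n : ℕ)
    (hterm : seq465 k n = (3, 3, 0)) (hmin : ∀ m, m < n → seq465 k m ≠ (3, 3, 0)) :
    ((n + 1 : ℕ) : ℝ) ≤ 7 * Real.logb 2 k := by
  unfold seq465 at hterm hmin
  have h4 : k % 4 = 0 ∨ k % 4 = 1 ∨ k % 4 = 2 ∨ k % 4 = 3 := by omega
  rcases h4 with h | h | h | h
  · have := Step465Aux.main465 k hk (by omega) n hterm hmin
    linarith
  · have := Step465Aux.main465 k hk (by omega) n hterm hmin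
    linarith
  · -- k ≡ 2 mod 4 : peel one decrement step
    rw [h] at hterm hmin
    have hk6 : 6 ≤ k := by omega
    obtain ⟨m, rfl⟩ : ∃ m, n = m + 1 := by
      refine ⟨n - 1, ?_⟩
      have : n ≠ 0 := by
        intro h0; subst h0
        simp [Prod.ext_iff] at hterm; try omega
      omega
    have e1 : step465 (k, 4, 2) = (k - 1, 4, 1) := Step465Aux.st42 k
    have hmod' : (k - 1) % 4 = 1 := by omega
    have hterm' : step465^[m] (k - 1, 4, (k - 1) % 4) = (3, 3, 0) := by
      rw [hmod', ← e1, ← Function.iterate_succ_apply]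
      exact hterm
    have hmin' : ∀ m', m' < m → step465^[m'] (k - 1, 4, (k - 1) % 4) ≠ (3, 3, 0) := by
      intro m' hm'
      rw [hmod', ← e1, ← Function.iterate_succ_apply]
      exact hmin (m' + 1) (by omega)
    have IH := Step465Aux.main465 (k - 1) (by omega) (by omega) m hterm' hmin'
    have hmono : Real.logb 2 ((k - 1 : ℕ) : ℝ) ≤ Real.logb 2 (k : ℝ) := by
      apply Real.logb_le_logb_of_le (by norm_num)
      · have : (5 : ℝ) ≤ ((k - 1 : ℕ) : ℝ) := by exact_mod_cast (by omega : 5 ≤ k - 1)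
        linarith
      · exact_mod_cast Nat.sub_le k 1
    push_cast at IH ⊢
    linarith
  · -- k ≡ 3 mod 4 : peel two decrement steps
    rw [h] at hterm hmin
    have hk7 : 7 ≤ k := by omega
    have e1 : step465 (k, 4, 3) = (k - 1, 4, 2) := Step465Aux.st43 k
    have e2 : step465 (k - 1, 4, 2) = (k - 2, 4, 1) := by
      rw [Step465Aux.st42]; simp only [Prod.mk.injEq, and_true, true_and]; omega
    obtain ⟨m, rfl⟩ : ∃ m, n = m + 2 := by
      refine ⟨n - 2, ?_⟩
      have h0 : n ≠ 0 := by
        intro h0; subst h0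
        simp [Prod.ext_iff] at hterm; try omega
      have h1 : n ≠ 1 := by
        intro h1; subst h1
        rw [Function.iterate_one, e1] at hterm
        simp [Prod.ext_iff] at hterm; try omega
      omega
    have hc2 : step465^[2] (k, 4, 3) = (k - 2, 4, 1) := by
      rw [show (2 : ℕ) = 1 + 1 from rfl, Function.iterate_add_apply,
        Function.iterate_one, e1, e2]
    have hmod' : (k - 2) % 4 = 1 := by omega
    have hterm' : step465^[m] (k - 2, 4, (k - 2) % 4) = (3, 3, 0) := by
      rw [hmod', ← hc2, ← Function.iterate_add_apply]
      exact hterm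
    have hmin' : ∀ m', m' < m → step465^[m'] (k - 2, 4, (k - 2) % 4) ≠ (3, 3, 0) := by
      intro m' hm'
      rw [hmod', ← hc2, ← Function.iterate_add_apply]
      exact hmin (m' + 2) (by omega)
    have IH := Step465Aux.main465 (k - 2) (by omega) (by omega) m hterm' hmin'
    have hmono : Real.logb 2 ((k - 2 : ℕ) : ℝ) ≤ Real.logb 2 (k : ℝ) := by
      apply Real.logb_le_logb_of_le (by norm_num)
      · have : (5 : ℝ) ≤ ((k - 2 : ℕ) : ℝ) := by exact_mod_cast (by omega : 5 ≤ k - 2)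
        linarith
      · exact_mod_cast Nat.sub_le k 2
    push_cast at IH ⊢
    linarith
end
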